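/- arXiv:1511.08471 — 2 statements merged into one kernel-verified Lean document; each statement's English description precedes it below -/
import Mathlib

section
/- Let M and N be connected one-dimensional complex manifolds (charted spaces over ℂ with holomorphic transition maps, i.e., IsManifold 𝓘(ℂ,ℂ)), both Hausdorff, with M compact and nonempty. If f : M → N is holomorphic (MDifferentiable with respect to 𝓘(ℂ,ℂ)) and nonconstant, then f is surjective; in particular N is compact. -/
open scoped Manifold
open Filter Topology Set Function

section Aux

variable {M : Type*} [TopologicalSpace M] [ChartedSpace ℂ M]
    [IsManifold 𝓘(ℂ, ℂ) (⊤ : ℕ∞) M]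
    {N : Type*} [TopologicalSpace N] [ChartedSpace ℂ N]
    [IsManifold 𝓘(ℂ, ℂ) (⊤ : ℕ∞) N]

private lemma analytic_chart {f : M → N} (hf : MDifferentiable 𝓘(ℂ, ℂ) 𝓘(ℂ, ℂ) f) (x : M) :
    ∃ U : Set ℂ, IsOpen U ∧ extChartAt 𝓘(ℂ, ℂ) x x ∈ U ∧
      U ⊆ (extChartAt 𝓘(ℂ, ℂ) x).target ∧
      (∀ z ∈ U, f ((extChartAt 𝓘(ℂ, ℂ) x).symm z) ∈ (extChartAt 𝓘(ℂ, ℂ) (f x)).source) ∧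
      AnalyticOnNhd ℂ (extChartAt 𝓘(ℂ, ℂ) (f x) ∘ f ∘ (extChartAt 𝓘(ℂ, ℂ) x).symm) U := by
  set e := extChartAt 𝓘(ℂ, ℂ) x with he
  set e' := extChartAt 𝓘(ℂ, ℂ) (f x) with he'
  have hcont : Continuous f := hf.continuous
  refine ⟨e.target ∩ e.symm ⁻¹' (f ⁻¹' e'.source), ?_, ?_, inter_subset_left, ?_, ?_⟩
  · exact (continuousOn_extChartAt_symm x).isOpen_inter_preimage
      (isOpen_extChartAt_target x) ((isOpen_extChartAt_source (f x)).preimage hcont)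
  · refine ⟨mem_extChartAt_target x, ?_⟩
    simp only [mem_preimage, e.left_inv (mem_extChartAt_source x)]
    exact mem_extChartAt_source (f x)
  · exact fun z hz => hz.2
  · refine DifferentiableOn.analyticOnNhd (fun z hz => ?_)
      ((continuousOn_extChartAt_symm x).isOpen_inter_preimage
        (isOpen_extChartAt_target x) ((isOpen_extChartAt_source (f x)).preimage hcont))
    have hy : e.symm z ∈ e.source := e.map_target hz.1
    have hx' : e.symm z ∈ (chartAt ℂ x).source := by rwa [he, extChartAt_source] at hy
    have hy' : f (e.symm z) ∈ (chartAt ℂ (f x)).source := by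
      have := hz.2; rwa [he', extChartAt_source] at this
    have hd := ((mdifferentiableAt_iff_of_mem_source hx' hy').1 (hf (e.symm z))).2
    rw [ModelWithCorners.range_eq_univ, differentiableWithinAt_univ] at hd
    rw [e.right_inv hz.1] at hd
    exact hd.differentiableWithinAt

end Aux

section Aux2

variable {M : Type*} [TopologicalSpace M] [ChartedSpace ℂ M]
    [IsManifold 𝓘(ℂ, ℂ) (⊤ : ℕ∞) M]
    {N : Type*} [TopologicalSpace N] [ChartedSpace ℂ N]
    [IsManifold 𝓘(ℂ, ℂ) (⊤ : ℕ∞) N]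

private lemma nhds_basics {f : M → N} (hf : Continuous f) (x : M) {U : Set ℂ}
    (hUo : IsOpen U) (hxU : extChartAt 𝓘(ℂ, ℂ) x x ∈ U) :
    ∀ᶠ y in 𝓝 x, y ∈ (extChartAt 𝓘(ℂ, ℂ) x).source ∧ extChartAt 𝓘(ℂ, ℂ) x y ∈ U ∧
      f y ∈ (extChartAt 𝓘(ℂ, ℂ) (f x)).source := by
  have h1 : ∀ᶠ y in 𝓝 x, y ∈ (extChartAt 𝓘(ℂ, ℂ) x).source := extChartAt_source_mem_nhds x
  have h2 : ∀ᶠ y in 𝓝 x, extChartAt 𝓘(ℂ, ℂ) x y ∈ U :=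
    (continuousAt_extChartAt x).preimage_mem_nhds (hUo.mem_nhds hxU)
  have h3 : ∀ᶠ y in 𝓝 x, f y ∈ (extChartAt 𝓘(ℂ, ℂ) (f x)).source :=
    hf.continuousAt.preimage_mem_nhds
      ((isOpen_extChartAt_source (f x)).mem_nhds (mem_extChartAt_source (f x)))
  filter_upwards [h1, h2, h3] with y hy1 hy2 hy3 using ⟨hy1, hy2, hy3⟩

private lemma map_symm_nhds (x : M) {y : M} (hy : y ∈ (extChartAt 𝓘(ℂ, ℂ) x).source) :
    map (extChartAt 𝓘(ℂ, ℂ) x).symm (𝓝 (extChartAt 𝓘(ℂ, ℂ) x y)) = 𝓝 y := by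
  have := map_extChartAt_symm_nhdsWithin_range' (I := 𝓘(ℂ, ℂ)) (x := x) hy
  rwa [ModelWithCorners.range_eq_univ, nhdsWithin_univ] at this

private lemma extmap_nhds (x : M) {y : M} (hy : y ∈ (extChartAt 𝓘(ℂ, ℂ) x).source) :
    map (extChartAt 𝓘(ℂ, ℂ) x) (𝓝 y) = 𝓝 (extChartAt 𝓘(ℂ, ℂ) x y) := by
  have := map_extChartAt_nhds' (I := 𝓘(ℂ, ℂ)) (x := x) hy
  rwa [ModelWithCorners.range_eq_univ, nhdsWithin_univ] at this

private lemma dichotomy {f : M → N} (hf : MDifferentiable 𝓘(ℂ, ℂ) 𝓘(ℂ, ℂ) f) (x : M) :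
    (∀ᶠ y in 𝓝 x, f y = f x) ∨ 𝓝 (f x) ≤ map f (𝓝 x) := by
  obtain ⟨U, hUo, hxU, hUt, hUs, hA⟩ := analytic_chart hf x
  set e := extChartAt 𝓘(ℂ, ℂ) x with he
  set e' := extChartAt 𝓘(ℂ, ℂ) (f x) with he'
  set g : ℂ → ℂ := e' ∘ f ∘ e.symm with hg
  have hev := nhds_basics hf.continuous x hUo hxU
  have hgex : g (e x) = e' (f x) := by
    simp only [hg, Function.comp_apply, e.left_inv (mem_extChartAt_source x)]
  rcases (hA (e x) hxU).eventually_constant_or_nhds_le_map_nhds with h | h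
  · left
    have h' : ∀ᶠ y in 𝓝 x, g (e y) = g (e x) := by
      rw [← extmap_nhds x (mem_extChartAt_source x)] at h
      exact h
    filter_upwards [h', hev] with y hy ⟨hy1, hy2, hy3⟩
    have : e' (f y) = e' (f x) := by
      rw [← hgex, ← hy]
      simp only [hg, Function.comp_apply, e.left_inv hy1]
    exact (extChartAt 𝓘(ℂ, ℂ) (f x)).injOn hy3 (mem_extChartAt_source (f x)) this
  · right
    rw [hgex] at h
    have hmg : map g (𝓝 (e x)) = map e' (map f (𝓝 x)) := by
      rw [← extmap_nhds x (mem_extChartAt_source x), Filter.map_map, Filter.map_map]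
      refine Filter.map_congr (EventuallyEq.fun_comp ?_ e')
      filter_upwards [extChartAt_source_mem_nhds (I := 𝓘(ℂ, ℂ)) x] with y hy
      simp only [Function.comp_apply, e.left_inv hy]
      exact congrArg f (e.left_inv hy)
    rw [hmg] at h
    have := Filter.map_mono (m := (e'.symm : ℂ → N)) h
    rw [he', map_symm_nhds (f x) (mem_extChartAt_source (f x)), Filter.map_map] at this
    refine this.trans (le_of_eq ?_)
    rw [Filter.map_map]
    refine Filter.map_congr ?_
    filter_upwards [hev] with y ⟨_, _, hy3⟩
    simp only [Function.comp_apply, e'.left_inv hy3]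
    exact e'.left_inv hy3

private lemma isClosed_locconst {f : M → N} (hf : MDifferentiable 𝓘(ℂ, ℂ) 𝓘(ℂ, ℂ) f) :
    IsClosed {x : M | ∀ᶠ y in 𝓝 x, f y = f x} := by
  set S := {x : M | ∀ᶠ y in 𝓝 x, f y = f x} with hS
  rw [← closure_eq_iff_isClosed]
  refine Subset.antisymm (fun x hx => ?_) subset_closure
  obtain ⟨U, hUo, hxU, hUt, hUs, hA⟩ := analytic_chart hf x
  set e := extChartAt 𝓘(ℂ, ℂ) x with he
  set e' := extChartAt 𝓘(ℂ, ℂ) (f x) with he'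
  set g : ℂ → ℂ := e' ∘ f ∘ e.symm with hg
  obtain ⟨r, hr, hball⟩ := Metric.isOpen_iff.1 hUo _ hxU
  have hev := nhds_basics hf.continuous x hUo hxU
  -- find a point of S in a suitable neighborhood of x
  have hWnhds : {y | y ∈ e.source ∧ e y ∈ Metric.ball (e x) r ∧
      f y ∈ e'.source} ∈ 𝓝 x := by
    have h2 : ∀ᶠ y in 𝓝 x, e y ∈ Metric.ball (e x) r :=
      (continuousAt_extChartAt x).preimage_mem_nhds
        (Metric.isOpen_ball.mem_nhds (Metric.mem_ball_self hr))
    have h3 : ∀ᶠ y in 𝓝 x, f y ∈ (extChartAt 𝓘(ℂ, ℂ) (f x)).source :=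
      hf.continuous.continuousAt.preimage_mem_nhds
        ((isOpen_extChartAt_source (f x)).mem_nhds (mem_extChartAt_source (f x)))
    filter_upwards [extChartAt_source_mem_nhds (I := 𝓘(ℂ, ℂ)) x, h2, h3] with y h1 h2 h3 using ⟨h1, h2, h3⟩
  obtain ⟨y, hyW, hyS⟩ := mem_closure_iff_nhds.1 hx _ hWnhds
  obtain ⟨hy1, hy2, hy3⟩ := hyW
  -- g is eventually constant near e y
  have hgy : ∀ᶠ z in 𝓝 (e y), g z = e' (f y) := by
    have hyS' : ∀ᶠ w in 𝓝 y, f w = f y := hyS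
    rw [← map_symm_nhds x hy1, eventually_map] at hyS'
    filter_upwards [hyS'] with z hz
    simp only [hg, Function.comp_apply, hz]
    exact congrArg e' hz
  -- identity theorem on the ball
  have hconst : EqOn g (fun _ => e' (f y)) (Metric.ball (e x) r) := by
    refine AnalyticOnNhd.eqOn_of_preconnected_of_eventuallyEq (hA.mono hball)
      analyticOnNhd_const ((convex_ball (e x) r).isPreconnected) hy2 hgy
  -- conclude x ∈ S
  have hfx : e' (f x) = e' (f y) := by
    have := hconst (Metric.mem_ball_self hr)
    rwa [show g (e x) = e' (f x) by
      simp only [hg, Function.comp_apply, e.left_inv (mem_extChartAt_source x)]] at this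
  have hevball : ∀ᶠ w in 𝓝 x, e w ∈ Metric.ball (e x) r :=
    (continuousAt_extChartAt x).preimage_mem_nhds
      (Metric.isOpen_ball.mem_nhds (Metric.mem_ball_self hr))
  filter_upwards [hev, hevball] with w ⟨hw1, _, hw3⟩ hwb
  have : e' (f w) = e' (f y) := by
    have := hconst hwb
    simp only [hg, Function.comp_apply, e.left_inv hw1] at this
    exact this
  rw [← hfx] at this
  exact e'.injOn hw3 (mem_extChartAt_source (f x)) this

end Aux2

/-- A nonconstant holomorphic map from a nonempty compact connected Riemann surface to a
connected Riemann surface is surjective; in particular the target is compact. -/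
theorem stmt4
    {M : Type*} [TopologicalSpace M] [ChartedSpace ℂ M]
    [IsManifold 𝓘(ℂ, ℂ) (⊤ : ℕ∞) M] [T2Space M]
    [CompactSpace M] [ConnectedSpace M] [Nonempty M]
    {N : Type*} [TopologicalSpace N] [ChartedSpace ℂ N]
    [IsManifold 𝓘(ℂ, ℂ) (⊤ : ℕ∞) N] [T2Space N] [ConnectedSpace N]
    (f : M → N) (hf : MDifferentiable 𝓘(ℂ, ℂ) 𝓘(ℂ, ℂ) f)
    (hnc : ¬∃ c : N, ∀ x : M, f x = c) :
    Function.Surjective f ∧ CompactSpace N := by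
  have hS : IsClopen {x : M | ∀ᶠ y in 𝓝 x, f y = f x} := by
    refine ⟨isClosed_locconst hf, isOpen_iff_mem_nhds.2 fun x hx => ?_⟩
    have hx' : ∀ᶠ y in 𝓝 x, f y = f x := hx
    filter_upwards [hx', hx'.eventually_nhds] with y hy1 hy2
    filter_upwards [hy2] with w hw
    rw [hw, hy1]
  rcases isClopen_iff.1 hS with hempty | huniv
  · -- f is nowhere locally constant, hence open
    have hopen : IsOpenMap f := by
      refine isOpenMap_iff_nhds_le.2 fun x => ?_
      rcases dichotomy hf x with h | h
      · exfalso
        have : x ∈ ({x : M | ∀ᶠ y in 𝓝 x, f y = f x} : Set M) := h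
        rw [hempty] at this
        exact this
      · exact h
    have hrange : IsClopen (Set.range f) :=
      ⟨(isCompact_range hf.continuous).isClosed, hopen.isOpen_range⟩
    rcases isClopen_iff.1 hrange with h | h
    · exact absurd h (Set.range_nonempty f).ne_empty
    · have hsurj : Function.Surjective f := Set.range_eq_univ.1 h
      refine ⟨hsurj, ?_⟩
      rw [← isCompact_univ_iff, ← h]
      exact isCompact_range hf.continuous
  · -- f is locally constant, hence constant: contradiction
    exfalso
    apply hnc
    have hlc : IsLocallyConstant f := (IsLocallyConstant.iff_eventually_eq f).2 fun x => by
      have : x ∈ Set.univ := Set.mem_univ x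
      rw [← huniv] at this
      exact this
    exact ⟨f (Classical.arbitrary M), fun x => hlc.apply_eq_of_preconnectedSpace x _⟩
end

section
/- Let M and N be compact connected Hausdorff one-dimensional complex manifolds (charted spaces over ℂ with holomorphic transition maps, i.e., IsManifold 𝓘(ℂ,ℂ)), and let f : M → N be a nonconstant holomorphic map (MDifferentiable with respect to 𝓘(ℂ,ℂ)). Then for every point p ∈ N the fiber f⁻¹(p) is finite and nonempty. -/
open scoped Manifold
open Set Filter Topology

section Aux

variable {M : Type*} [TopologicalSpace M] [ChartedSpace ℂ M]
    [IsManifold 𝓘(ℂ, ℂ) (⊤ : ℕ∞) M]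
    {N : Type*} [TopologicalSpace N] [ChartedSpace ℂ N]
    [IsManifold 𝓘(ℂ, ℂ) (⊤ : ℕ∞) N]

/-- Local analytic representation of a holomorphic map between Riemann surfaces. -/
lemma stmt7_localRep (f : M → N) (hf : MDifferentiable 𝓘(ℂ, ℂ) 𝓘(ℂ, ℂ) f) (x : M) :
    ∃ V : Set ℂ, IsOpen V ∧ extChartAt 𝓘(ℂ, ℂ) x x ∈ V ∧
      V ⊆ (extChartAt 𝓘(ℂ, ℂ) x).target ∧
      AnalyticOnNhd ℂ
        (extChartAt 𝓘(ℂ, ℂ) (f x) ∘ f ∘ (extChartAt 𝓘(ℂ, ℂ) x).symm) V ∧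
      ∀ z ∈ V, (extChartAt 𝓘(ℂ, ℂ) x).symm z ∈ (extChartAt 𝓘(ℂ, ℂ) x).source ∧
        f ((extChartAt 𝓘(ℂ, ℂ) x).symm z) ∈ (extChartAt 𝓘(ℂ, ℂ) (f x)).source := by
  set φ := extChartAt 𝓘(ℂ, ℂ) x
  set ψ := extChartAt 𝓘(ℂ, ℂ) (f x)
  set U : Set M := φ.source ∩ f ⁻¹' ψ.source with hU
  have hUo : IsOpen U :=
    (isOpen_extChartAt_source x).inter
      (hf.continuous.isOpen_preimage _ (isOpen_extChartAt_source (f x)))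
  set V : Set ℂ := φ.target ∩ φ.symm ⁻¹' U with hVdef
  have hVo : IsOpen V :=
    (continuousOn_extChartAt_symm x).isOpen_inter_preimage (isOpen_extChartAt_target x) hUo
  have hxV : φ x ∈ V := by
    refine ⟨φ.map_source (mem_extChartAt_source x), ?_⟩
    rw [mem_preimage, extChartAt_to_inv]
    exact ⟨mem_extChartAt_source x, mem_extChartAt_source (f x)⟩
  have hVt : V ⊆ φ.target := inter_subset_left
  have hmem : ∀ z ∈ V, φ.symm z ∈ φ.source ∧ f (φ.symm z) ∈ ψ.source := fun z hz => hz.2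
  refine ⟨V, hVo, hxV, hVt, ?_, hmem⟩
  have hdiff : DifferentiableOn ℂ (ψ ∘ f ∘ φ.symm) V := by
    intro z hz
    obtain ⟨h1, h2⟩ := hmem z hz
    have h1' : φ.symm z ∈ (chartAt ℂ x).source := by rwa [← extChartAt_source 𝓘(ℂ, ℂ) x]
    have h2' : f (φ.symm z) ∈ (chartAt ℂ (f x)).source := by
      rwa [← extChartAt_source 𝓘(ℂ, ℂ) (f x)]
    have hd := ((mdifferentiableAt_iff_of_mem_source h1' h2').1 (hf (φ.symm z))).2
    rw [φ.right_inv (hVt hz)] at hd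
    have hd' : DifferentiableAt ℂ (ψ ∘ f ∘ φ.symm) z := by
      simpa [φ, ψ, ModelWithCorners.Boundaryless.range_eq_univ, differentiableWithinAt_univ] using hd
    exact hd'.differentiableWithinAt
  exact fun z hz => hdiff.analyticAt (hVo.mem_nhds hz)

/-- Dichotomy at a point for a holomorphic map between Riemann surfaces: either it is
locally constant there, or its fiber through the point is locally isolated, it maps
neighborhoods to neighborhoods, and points of local constancy do not accumulate there. -/
lemma stmt7_dichotomy (f : M → N) (hf : MDifferentiable 𝓘(ℂ, ℂ) 𝓘(ℂ, ℂ) f) (x : M) :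
    (∀ᶠ y in 𝓝 x, f y = f x) ∨
    ((∀ᶠ y in 𝓝[≠] x, f y ≠ f x) ∧ 𝓝 (f x) ≤ map f (𝓝 x) ∧
      ¬ ∃ᶠ y in 𝓝[≠] x, ∀ᶠ w in 𝓝 y, f w = f y) := by
  obtain ⟨V, hVo, hxV, hVt, hgan, hmem⟩ := stmt7_localRep f hf x
  set φ := extChartAt 𝓘(ℂ, ℂ) x
  set ψ := extChartAt 𝓘(ℂ, ℂ) (f x)
  set g : ℂ → ℂ := ψ ∘ f ∘ φ.symm with hgdef
  have hsrc : φ.source ∈ 𝓝 x := extChartAt_source_mem_nhds x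
  have hmap : map φ (𝓝 x) = 𝓝 (φ x) := map_extChartAt_nhds_of_boundaryless (I := 𝓘(ℂ, ℂ)) x
  have hpreV : φ ⁻¹' V ∈ 𝓝 x := by
    have hv : V ∈ map φ (𝓝 x) := by rw [hmap]; exact hVo.mem_nhds hxV
    exact mem_map.1 hv
  have hrep : ∀ y, y ∈ φ.source → φ y ∈ V → g (φ y) = ψ (f y) ∧ f y ∈ ψ.source := by
    intro y hy hyV
    have h2 := (hmem _ hyV).2
    rw [φ.left_inv hy] at h2
    refine ⟨?_, h2⟩
    show ψ (f (φ.symm (φ y))) = ψ (f y)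
    rw [φ.left_inv hy]
  have hgx : g (φ x) = ψ (f x) := (hrep x (mem_extChartAt_source x) hxV).1
  have transfer : (∀ᶠ z in 𝓝 (φ x), g z = g (φ x)) → ∀ᶠ y in 𝓝 x, f y = f x := by
    intro hc
    have hc' : ∀ᶠ y in 𝓝 x, g (φ y) = g (φ x) := by
      rw [← hmap] at hc; exact eventually_map.1 hc
    filter_upwards [hsrc, hpreV, hc'] with y hy hyV hgy
    obtain ⟨h1, h2⟩ := hrep y hy hyV
    have heq : ψ (f y) = ψ (f x) := by rw [← h1, hgy, hgx]
    have heq2 := congrArg ψ.symm heq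
    rwa [ψ.left_inv h2, ψ.left_inv (mem_extChartAt_source (f x))] at heq2
  by_cases hc : ∀ᶠ z in 𝓝 (φ x), g z = g (φ x)
  · exact Or.inl (transfer hc)
  right
  have hinj : ∀ y, y ∈ φ.source → y ≠ x → φ y ≠ φ x :=
    fun y hy hyx h => hyx (φ.injOn hy (mem_extChartAt_source x) h)
  refine ⟨?_, ?_, ?_⟩
  · -- isolated fibers
    have h := ((hgan _ hxV).eventually_eq_or_eventually_ne analyticAt_const).resolve_left hc
    rw [eventually_nhdsWithin_iff] at h
    have h' : ∀ᶠ y in 𝓝 x, φ y ∈ ({φ x}ᶜ : Set ℂ) → g (φ y) ≠ g (φ x) := by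
      rw [← hmap] at h; exact eventually_map.1 h
    rw [eventually_nhdsWithin_iff]
    filter_upwards [hsrc, hpreV, h'] with y hy hyV hne hyx hfeq
    have h1 := (hrep y hy hyV).1
    exact hne (hinj y hy hyx) (by rw [h1, hgx, hfeq])
  · -- open mapping
    have h := (hgan _ hxV).eventually_constant_or_nhds_le_map_nhds.resolve_left hc
    have hψ : map ψ.symm (𝓝 (ψ (f x))) = 𝓝 (f x) := by
      have h' := map_extChartAt_symm_nhdsWithin_range (I := 𝓘(ℂ, ℂ)) (f x)
      rwa [ModelWithCorners.Boundaryless.range_eq_univ, nhdsWithin_univ] at h'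
    have heq : (ψ.symm ∘ g ∘ φ) =ᶠ[𝓝 x] f := by
      filter_upwards [hsrc, hpreV] with y hy hyV
      obtain ⟨h1, h2⟩ := hrep y hy hyV
      show ψ.symm (g (φ y)) = f y
      rw [h1, ψ.left_inv h2]
    calc 𝓝 (f x) = map ψ.symm (𝓝 (g (φ x))) := by rw [hgx, hψ]
      _ ≤ map ψ.symm (map g (𝓝 (φ x))) := map_mono h
      _ = map (ψ.symm ∘ g) (𝓝 (φ x)) := map_map
      _ = map ((ψ.symm ∘ g) ∘ φ) (𝓝 x) := by rw [← hmap, map_map]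
      _ = map f (𝓝 x) := map_congr heq
  · -- points of local constancy do not accumulate
    intro hfreq
    apply hc
    have hder : AnalyticAt ℂ (deriv g) (φ x) := hgan.deriv _ hxV
    have hfreq' : ∃ᶠ z in 𝓝[≠] (φ x), deriv g z = 0 := by
      rw [frequently_nhdsWithin_iff] at hfreq ⊢
      rw [← hmap, frequently_map]
      have hev2 : ∀ᶠ y in 𝓝 x, y ∈ φ.source ∧ φ y ∈ V := by
        filter_upwards [hsrc, hpreV] with y h1 h2; exact ⟨h1, h2⟩
      refine (hfreq.and_eventually hev2).mono ?_
      rintro y ⟨⟨hyS, hyx⟩, hy, hyV⟩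
      refine ⟨?_, hinj y hy hyx⟩
      have htd : Tendsto φ.symm (𝓝 (φ y)) (𝓝 y) := by
        have h' : Tendsto φ.symm (𝓝 (φ y)) (𝓝 (φ.symm (φ y))) :=
          continuousAt_extChartAt_symm' (I := 𝓘(ℂ, ℂ)) hy
        rwa [φ.left_inv hy] at h'
      have hev : g =ᶠ[𝓝 (φ y)] fun _ => ψ (f y) := by
        filter_upwards [htd.eventually hyS] with z h1
        show ψ (f (φ.symm z)) = ψ (f y)
        rw [h1]
      rw [hev.deriv_eq, deriv_const]
    have hev0 : ∀ᶠ z in 𝓝 (φ x), deriv g z = 0 :=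
      hder.frequently_zero_iff_eventually_zero.1 hfreq'
    obtain ⟨r, hr, hball⟩ := Metric.mem_nhds_iff.1 (inter_mem (hVo.mem_nhds hxV) hev0)
    have hgd : DifferentiableOn ℂ g (Metric.ball (φ x) r) := fun z hz =>
      ((hgan z (hball hz).1).differentiableAt).differentiableWithinAt
    have hconst : ∀ z ∈ Metric.ball (φ x) r, g z = g (φ x) := by
      intro z hz
      refine (convex_ball _ _).is_const_of_fderivWithin_eq_zero hgd ?_ hz (Metric.mem_ball_self hr)
      intro w hw
      have h0 : deriv g w = 0 := (hball hw).2
      have hfd : fderiv ℂ g w = 0 :=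
        ContinuousLinearMap.ext_ring (by rw [fderiv_apply_one_eq_deriv, h0]; simp)
      rw [fderivWithin_of_isOpen Metric.isOpen_ball hw, hfd]
    exact eventually_of_mem (Metric.ball_mem_nhds _ hr) hconst

end Aux

/-- A nonconstant holomorphic map between compact connected Riemann surfaces is a surjective
branched covering of finite degree: every fiber is finite and nonempty. -/
theorem stmt7
    {M : Type*} [TopologicalSpace M] [ChartedSpace ℂ M]
    [IsManifold 𝓘(ℂ, ℂ) (⊤ : ℕ∞) M] [T2Space M]
    [CompactSpace M] [ConnectedSpace M]
    {N : Type*} [TopologicalSpace N] [ChartedSpace ℂ N]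
    [IsManifold 𝓘(ℂ, ℂ) (⊤ : ℕ∞) N] [T2Space N]
    [CompactSpace N] [ConnectedSpace N]
    (f : M → N) (hf : MDifferentiable 𝓘(ℂ, ℂ) 𝓘(ℂ, ℂ) f)
    (hnc : ¬∃ c : N, ∀ x : M, f x = c) :
    ∀ p : N, (f ⁻¹' {p}).Finite ∧ (f ⁻¹' {p}).Nonempty := by
  -- f is nowhere locally constant
  have hS : ∀ x : M, ¬∀ᶠ y in 𝓝 x, f y = f x := by
    intro x₀ hx₀
    set S : Set M := {x : M | ∀ᶠ y in 𝓝 x, f y = f x} with hSdef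
    have hSo : IsOpen S := by
      rw [isOpen_iff_mem_nhds]
      intro x hx
      filter_upwards [hx.eventually_nhds, hx] with y hy hyx
      exact hy.mono fun w hw => hw.trans hyx.symm
    have hSc : IsClosed S := by
      refine isClosed_of_closure_subset fun x hx => ?_
      by_contra hxS
      rcases stmt7_dichotomy f hf x with h | ⟨_, _, h3⟩
      · exact hxS h
      apply h3
      rw [frequently_nhdsWithin_iff]
      refine (mem_closure_iff_frequently.1 hx).mono fun y hy => ⟨hy, fun h => ?_⟩
      exact hxS (h ▸ hy)
    have hSuniv : S = univ := IsClopen.eq_univ ⟨hSc, hSo⟩ ⟨x₀, hx₀⟩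
    apply hnc
    refine ⟨f x₀, ?_⟩
    have hTc : IsClosed {x : M | f x = f x₀} := isClosed_eq hf.continuous continuous_const
    have hTo : IsOpen {x : M | f x = f x₀} := by
      rw [isOpen_iff_mem_nhds]
      intro x hx
      have hxS : x ∈ S := hSuniv ▸ mem_univ x
      exact hxS.mono fun y hy => hy.trans hx
    have hTuniv := IsClopen.eq_univ ⟨hTc, hTo⟩ ⟨x₀, rfl⟩
    intro x
    exact (hTuniv ▸ mem_univ x : x ∈ {x : M | f x = f x₀})
  intro p
  constructor
  · -- finiteness of the fiber
    have hclosed : IsClosed (f ⁻¹' {p}) := isClosed_singleton.preimage hf.continuous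
    have hcpt : IsCompact (f ⁻¹' {p}) := hclosed.isCompact
    have hisol : ∀ x : M, ∃ O : Set M, IsOpen O ∧ x ∈ O ∧ ∀ y ∈ O, y ≠ x → f y ≠ f x := by
      intro x
      have h := ((stmt7_dichotomy f hf x).resolve_left (hS x)).1
      rw [eventually_nhdsWithin_iff] at h
      rcases eventually_nhds_iff.1 h with ⟨O, hO, hOo, hxO⟩
      exact ⟨O, hOo, hxO, fun y hy hyx => hO y hy hyx⟩
    choose O hOo hxO hO using hisol
    obtain ⟨t, hts, htf, hcover⟩ :=
      hcpt.elim_finite_subcover_image (fun x _ => hOo x)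
        (fun y hy => mem_biUnion hy (hxO y))
    refine htf.subset fun y hy => ?_
    obtain ⟨x, hxt, hyOx⟩ := by simpa using hcover hy
    rcases eq_or_ne y x with rfl | hne
    · exact hxt
    · exact absurd (hy.trans (hts hxt : f x = p).symm) (hO x y hyOx hne)
  · -- surjectivity
    have hopen : IsOpen (range f) := by
      rw [isOpen_iff_mem_nhds]
      rintro _ ⟨x, rfl⟩
      have h := ((stmt7_dichotomy f hf x).resolve_left (hS x)).2.1
      exact h (by rw [mem_map, preimage_range]; exact univ_mem)
    have hcl : IsClosed (range f) := (isCompact_range hf.continuous).isClosed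
    have hru : range f = univ := IsClopen.eq_univ ⟨hcl, hopen⟩ (range_nonempty f)
    obtain ⟨x, hx⟩ : p ∈ range f := hru ▸ mem_univ p
    exact ⟨x, by simp [hx]⟩
end
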